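/- arXiv:1608.02092 — 6 statements merged into one kernel-verified Lean document; each statement's English description precedes it below -/
import Mathlib

section
/- In the abstract LOD setting, let F : V → ℝ be a continuous linear functional, let u ∈ V satisfy a(u, v) = F(v) for all v ∈ V, and let ū_H ∈ V_H satisfy a((1 − 𝒞)ū_H, (1 − 𝒞)v_H) = F((1 − 𝒞)v_H) for all v_H ∈ V_H. Then ū_H = I_H u, i.e., the LOD Galerkin solution coincides with the quasi-interpolation of the exact solution. -/
/-- In the abstract LOD setting, if `u` solves the exact variational
problem and `ū_H ∈ V_H` solves the LOD Galerkin problem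
`a((1-𝒞)ū_H, (1-𝒞)v_H) = F((1-𝒞)v_H)` for all `v_H ∈ V_H`, then `ū_H = I_H u`. -/
theorem lod_galerkin_eq_quasi_interpolation
    {V : Type*} [NormedAddCommGroup V] [InnerProductSpace ℝ V] [CompleteSpace V]
    (a : V →ₗ[ℝ] V →ₗ[ℝ] ℝ) (α β : ℝ) (hα : 0 < α) (hβ : 0 < β)
    (ha_symm : ∀ u v : V, a u v = a v u)
    (ha_bdd : ∀ u v : V, |a u v| ≤ β * ‖u‖ * ‖v‖)
    (ha_coer : ∀ v : V, α * ‖v‖ ^ 2 ≤ a v v)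
    (VH : Submodule ℝ V) (hVHfin : FiniteDimensional ℝ VH)
    (IH : V →L[ℝ] V)
    (hIH_range : LinearMap.range (IH : V →ₗ[ℝ] V) = VH)
    (hIH_proj : ∀ v : V, IH (IH v) = IH v)
    (Cor : V →ₗ[ℝ] V)
    (hCor_W : ∀ v : V, Cor v ∈ LinearMap.ker (IH : V →ₗ[ℝ] V))
    (hCor_orth : ∀ w ∈ LinearMap.ker (IH : V →ₗ[ℝ] V), ∀ v : V, a w (v - Cor v) = 0)
    (F : V →L[ℝ] ℝ) (u : V) (hu : ∀ v : V, a u v = F v)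
    (uH : V) (huH : uH ∈ VH)
    (hsol : ∀ vH ∈ VH, a (uH - Cor uH) (vH - Cor vH) = F (vH - Cor vH)) :
    uH = IH u := by
  -- IH fixes elements of VH
  have hfix : ∀ x ∈ VH, IH x = x := by
    intro x hx
    rw [← hIH_range] at hx
    obtain ⟨y, rfl⟩ := hx
    exact hIH_proj y
  have hIHu : IH u ∈ VH := hIH_range ▸ LinearMap.mem_range_self _ u
  -- w₀ := u - (IH u - Cor (IH u)) ∈ ker IH
  have hw0 : u - (IH u - Cor (IH u)) ∈ LinearMap.ker (IH : V →ₗ[ℝ] V) := by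
    have h1 : IH (Cor (IH u)) = 0 := hCor_W (IH u)
    simp [LinearMap.mem_ker, map_sub, hIH_proj, h1]
  -- key orthogonality: a ((1-C)uH - (1-C)(IH u)) ((1-C)vH) = 0 for vH ∈ VH
  have key : ∀ vH ∈ VH,
      a ((uH - Cor uH) - (IH u - Cor (IH u))) (vH - Cor vH) = 0 := by
    intro vH hvH
    have h1 : a u (vH - Cor vH) = F (vH - Cor vH) := hu _
    have h2 : a (uH - Cor uH) (vH - Cor vH) = F (vH - Cor vH) := hsol vH hvH
    have h3 : a (u - (IH u - Cor (IH u))) (vH - Cor vH) = 0 :=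
      hCor_orth _ hw0 vH
    have h3' : a u (vH - Cor vH) - a (IH u - Cor (IH u)) (vH - Cor vH) = 0 := by
      rw [← LinearMap.sub_apply, ← map_sub]; exact h3
    rw [map_sub a (uH - Cor uH) (IH u - Cor (IH u)), LinearMap.sub_apply, h2]
    linarith
  -- apply with vH = uH - IH u ∈ VH
  have hmem : uH - IH u ∈ VH := VH.sub_mem huH hIHu
  have hz := key (uH - IH u) hmem
  set z := (uH - IH u) - Cor (uH - IH u) with hzdef
  have hz' : a z z = 0 := by
    have harg : (uH - Cor uH) - (IH u - Cor (IH u)) = z := by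
      simp only [hzdef, map_sub]; abel
    rw [harg] at hz
    exact hz
  have hz0 : z = 0 := by
    have hc := ha_coer z
    rw [hz'] at hc
    have : ‖z‖ ^ 2 ≤ 0 := by nlinarith
    have : ‖z‖ = 0 := by nlinarith [sq_nonneg ‖z‖, norm_nonneg z]
    exact norm_eq_zero.mp this
  -- so uH - IH u = Cor (uH - IH u) ∈ ker IH, but also IH fixes it
  have heq : uH - IH u = Cor (uH - IH u) := by
    have h := hz0
    rw [hzdef] at h
    exact sub_eq_zero.mp h
  have h0 : IH (uH - IH u) = 0 := by rw [heq]; exact hCor_W _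
  have hfixd := hfix _ hmem
  rw [hfixd] at h0
  exact sub_eq_zero.mp h0
end

section
/- In the abstract LOD setting with the approximation property of I_H, let f ∈ L and let u ∈ V satisfy a(u, v) = ⟨f, ι v⟩_L for all v ∈ V. Then the error of the ideal LOD approximation satisfies the energy estimate ‖u − (1 − 𝒞)I_H u‖_V ≤ (C_I H / α) ‖f‖_L. -/
open scoped RealInnerProductSpace

/-- In the abstract LOD setting with the approximation property of
`I_H`, if `u` solves `a(u,v) = ⟨f, ιv⟩_L` for all `v ∈ V`, then the ideal LOD
approximation satisfies `‖u − (1 − 𝒞)I_H u‖_V ≤ (C_I H / α) ‖f‖_L`. -/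
theorem lod_energy_error_estimate
    {V : Type*} [NormedAddCommGroup V] [InnerProductSpace ℝ V] [CompleteSpace V]
    {L : Type*} [NormedAddCommGroup L] [InnerProductSpace ℝ L] [CompleteSpace L]
    (a : V →ₗ[ℝ] V →ₗ[ℝ] ℝ) (α β : ℝ) (hα : 0 < α) (hβ : 0 < β)
    (ha_symm : ∀ u v : V, a u v = a v u)
    (ha_bdd : ∀ u v : V, |a u v| ≤ β * ‖u‖ * ‖v‖)
    (ha_coer : ∀ v : V, α * ‖v‖ ^ 2 ≤ a v v)
    (VH : Submodule ℝ V) (hVHfin : FiniteDimensional ℝ VH)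
    (IH : V →L[ℝ] V)
    (hIH_range : LinearMap.range (IH : V →ₗ[ℝ] V) = VH)
    (hIH_proj : ∀ v : V, IH (IH v) = IH v)
    (Cor : V →ₗ[ℝ] V)
    (hCor_W : ∀ v : V, Cor v ∈ LinearMap.ker (IH : V →ₗ[ℝ] V))
    (hCor_orth : ∀ w ∈ LinearMap.ker (IH : V →ₗ[ℝ] V), ∀ v : V, a w (v - Cor v) = 0)
    (ι : V →L[ℝ] L) (hι_inj : Function.Injective ι)
    (H CI : ℝ) (hH : 0 < H) (hCI : 0 < CI)
    (hIH_approx : ∀ v : V, ‖ι (v - IH v)‖ ≤ CI * H * ‖v‖)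
    (f : L) (u : V) (hu : ∀ v : V, a u v = ⟪f, ι v⟫) :
    ‖u - (IH u - Cor (IH u))‖ ≤ CI * H / α * ‖f‖ := by
  set e := u - (IH u - Cor (IH u)) with he
  have hIHe : IH e = 0 := by
    have hc : IH (Cor (IH u)) = 0 := LinearMap.mem_ker.mp (hCor_W (IH u))
    simp [he, map_sub, hIH_proj, hc]
  have heW : e ∈ LinearMap.ker (IH : V →ₗ[ℝ] V) := LinearMap.mem_ker.mpr hIHe
  have hιe : ‖ι e‖ ≤ CI * H * ‖e‖ := by
    have := hIH_approx e
    rwa [hIHe, sub_zero] at this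
  have haee : a e e ≤ ‖f‖ * (CI * H * ‖e‖) := by
    have h1 : a e (IH u - Cor (IH u)) = 0 := hCor_orth e heW (IH u)
    have h2 : a e e = a u e := by
      have : a e e = a e u - a e (IH u - Cor (IH u)) := by
        rw [he]; simp [map_sub]
      rw [this, h1, sub_zero, ha_symm]
    have h3 : a u e = ⟪f, ι e⟫ := hu e
    calc a e e = ⟪f, ι e⟫ := by rw [h2, h3]
      _ ≤ ‖f‖ * ‖ι e‖ := real_inner_le_norm f (ι e)
      _ ≤ ‖f‖ * (CI * H * ‖e‖) := by
          exact mul_le_mul_of_nonneg_left hιe (norm_nonneg f)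
  have key : α * ‖e‖ ^ 2 ≤ ‖f‖ * (CI * H * ‖e‖) := le_trans (ha_coer e) haee
  rcases eq_or_lt_of_le (norm_nonneg e) with h0 | h0
  · rw [← h0]
    positivity
  · have : α * ‖e‖ ≤ ‖f‖ * (CI * H) := by
      have := key
      nlinarith
    calc ‖e‖ = α * ‖e‖ / α := by field_simp
      _ ≤ ‖f‖ * (CI * H) / α := by gcongr
      _ = CI * H / α * ‖f‖ := by ring
end

section
/- In the abstract LOD setting, assume additionally that I_H is stable in the V-norm, i.e., ‖I_H v‖_V ≤ C_S ‖v‖_V for all v ∈ V with a constant C_S > 0. Then the Petrov–Galerkin bilinear form b(v_H, z_H) := a(v_H, (1 − 𝒞)z_H) is coercive on V_H: for every v_H ∈ V_H one has a(v_H, (1 − 𝒞)v_H) ≥ (α / C_S²) ‖v_H‖_V². -/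
/-- In the abstract LOD setting, if additionally `I_H` is `V`-stable
with constant `C_S`, then the Petrov–Galerkin form `b(v_H, z_H) = a(v_H, (1−𝒞)z_H)`
is coercive on `V_H`: `a(v_H, (1−𝒞)v_H) ≥ (α / C_S²) ‖v_H‖²` for all `v_H ∈ V_H`. -/
theorem lod_petrov_galerkin_coercive
    {V : Type*} [NormedAddCommGroup V] [InnerProductSpace ℝ V] [CompleteSpace V]
    (a : V →ₗ[ℝ] V →ₗ[ℝ] ℝ) (α β : ℝ) (hα : 0 < α) (hβ : 0 < β)
    (ha_symm : ∀ u v : V, a u v = a v u)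
    (ha_bdd : ∀ u v : V, |a u v| ≤ β * ‖u‖ * ‖v‖)
    (ha_coer : ∀ v : V, α * ‖v‖ ^ 2 ≤ a v v)
    (VH : Submodule ℝ V) (hVHfin : FiniteDimensional ℝ VH)
    (IH : V →L[ℝ] V)
    (hIH_range : LinearMap.range (IH : V →ₗ[ℝ] V) = VH)
    (hIH_proj : ∀ v : V, IH (IH v) = IH v)
    (Cor : V →ₗ[ℝ] V)
    (hCor_W : ∀ v : V, Cor v ∈ LinearMap.ker (IH : V →ₗ[ℝ] V))
    (hCor_orth : ∀ w ∈ LinearMap.ker (IH : V →ₗ[ℝ] V), ∀ v : V, a w (v - Cor v) = 0)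
    (CS : ℝ) (hCS : 0 < CS)
    (hIH_stab : ∀ v : V, ‖IH v‖ ≤ CS * ‖v‖) :
    ∀ vH ∈ VH, α / CS ^ 2 * ‖vH‖ ^ 2 ≤ a vH (vH - Cor vH) := by
  intro vH hvH
  -- IH vH = vH
  obtain ⟨u, hu⟩ : ∃ u, IH u = vH := by
    rw [← hIH_range] at hvH; exact hvH
  have hfix : IH vH = vH := by rw [← hu, hIH_proj]
  set e := vH - Cor vH with he
  -- norm bound: ‖vH‖ ≤ CS * ‖e‖
  have hIHe : IH e = vH := by
    have h0 : IH (Cor vH) = 0 := hCor_W vH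
    simp [he, map_sub, hfix, h0]
  have hnorm : ‖vH‖ ≤ CS * ‖e‖ := by
    calc ‖vH‖ = ‖IH e‖ := by rw [hIHe]
    _ ≤ CS * ‖e‖ := hIH_stab e
  -- a vH e = a e e
  have hsplit : a vH e = a e e := by
    have h1 : a (Cor vH) e = 0 := hCor_orth _ (hCor_W vH) vH
    have : vH = e + Cor vH := by simp [he]
    rw [this]
    simp [map_add, h1]
  rw [hsplit]
  have hcoer := ha_coer e
  have h2 : ‖vH‖ ^ 2 ≤ CS ^ 2 * ‖e‖ ^ 2 := by
    have := mul_self_le_mul_self (norm_nonneg vH) hnorm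
    nlinarith [norm_nonneg e, norm_nonneg vH]
  have hCS2 : (0:ℝ) < CS ^ 2 := by positivity
  rw [div_mul_eq_mul_div, div_le_iff₀ hCS2] at *
  nlinarith
end

section
/- In the abstract LOD setting with the approximation property of I_H, the worst-case best-approximation error is at most of order H: wcba ≤ (C_I ‖ι‖ / α) H, where ‖ι‖ denotes the operator norm of ι. -/
open scoped RealInnerProductSpace

/-- In the abstract LOD setting with the approximation property of
`I_H`, the worst-case best-approximation error satisfies `wcba ≤ (C_I ‖ι‖ / α) H`. -/
theorem lod_wcba_first_order
    {V : Type*} [NormedAddCommGroup V] [InnerProductSpace ℝ V] [CompleteSpace V]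
    {L : Type*} [NormedAddCommGroup L] [InnerProductSpace ℝ L] [CompleteSpace L]
    (a : V →ₗ[ℝ] V →ₗ[ℝ] ℝ) (α β : ℝ) (hα : 0 < α) (hβ : 0 < β)
    (ha_symm : ∀ u v : V, a u v = a v u)
    (ha_bdd : ∀ u v : V, |a u v| ≤ β * ‖u‖ * ‖v‖)
    (ha_coer : ∀ v : V, α * ‖v‖ ^ 2 ≤ a v v)
    (VH : Submodule ℝ V) (hVHfin : FiniteDimensional ℝ VH)
    (IH : V →L[ℝ] V)
    (hIH_range : LinearMap.range (IH : V →ₗ[ℝ] V) = VH)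
    (hIH_proj : ∀ v : V, IH (IH v) = IH v)
    (Cor : V →ₗ[ℝ] V)
    (hCor_W : ∀ v : V, Cor v ∈ LinearMap.ker (IH : V →ₗ[ℝ] V))
    (hCor_orth : ∀ w ∈ LinearMap.ker (IH : V →ₗ[ℝ] V), ∀ v : V, a w (v - Cor v) = 0)
    (ι : V →L[ℝ] L) (hι_inj : Function.Injective ι)
    (H CI : ℝ) (hH : 0 < H) (hCI : 0 < CI)
    (hIH_approx : ∀ v : V, ‖ι (v - IH v)‖ ≤ CI * H * ‖v‖)
    (usol : L → V) (husol : ∀ (g : L) (v : V), a (usol g) v = ⟪g, ι v⟫)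
    (wcba : ℝ)
    (hwcba : wcba = ⨆ g : {g : L // g ≠ 0}, ⨅ vH : VH, ‖ι (usol g.1) - ι vH‖ / ‖g.1‖) :
    wcba ≤ CI * ‖ι‖ / α * H := by
  rw [hwcba]
  have hbound : (0:ℝ) ≤ CI * ‖ι‖ / α * H := by positivity
  apply Real.iSup_le _ hbound
  rintro ⟨g, hg⟩
  have hg' : (0:ℝ) < ‖g‖ := norm_pos_iff.mpr hg
  set u := usol g with hu
  have hmem : IH u ∈ VH := hIH_range ▸ LinearMap.mem_range_self (IH : V →ₗ[ℝ] V) u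
  have hnu : ‖u‖ ≤ ‖ι‖ * ‖g‖ / α := by
    rcases eq_or_ne (‖u‖) 0 with h0 | h0
    · rw [h0]; positivity
    · have hupos : 0 < ‖u‖ := lt_of_le_of_ne (norm_nonneg u) (Ne.symm h0)
      have h1 : α * ‖u‖ ^ 2 ≤ a u u := ha_coer u
      have h2 : a u u = ⟪g, ι u⟫ := husol g u
      have h3 : ⟪g, ι u⟫ ≤ ‖g‖ * (‖ι‖ * ‖u‖) := by
        calc ⟪g, ι u⟫ ≤ ‖g‖ * ‖ι u‖ := real_inner_le_norm g (ι u)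
          _ ≤ ‖g‖ * (‖ι‖ * ‖u‖) :=
              mul_le_mul_of_nonneg_left (ι.le_opNorm u) (norm_nonneg g)
      rw [le_div_iff₀ hα]
      nlinarith [h1, h2, h3, hupos]
  have key : ‖ι u - ι (IH u)‖ / ‖g‖ ≤ CI * ‖ι‖ / α * H := by
    have h4 : ‖ι u - ι (IH u)‖ ≤ CI * H * ‖u‖ := by
      rw [← map_sub]; exact hIH_approx u
    rw [div_le_iff₀ hg']
    calc ‖ι u - ι (IH u)‖ ≤ CI * H * (‖ι‖ * ‖g‖ / α) := by
          refine le_trans h4 (mul_le_mul_of_nonneg_left hnu (by positivity))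
      _ = CI * ‖ι‖ / α * H * ‖g‖ := by ring
  have hbdd : BddBelow (Set.range fun vH : VH => ‖ι u - ι vH‖ / ‖g‖) := by
    refine ⟨0, ?_⟩
    rintro x ⟨vH, rfl⟩
    positivity
  exact ciInf_le_of_le hbdd ⟨IH u, hmem⟩ key
end

section
/- Let Ω ⊆ ℝ^d be a Lebesgue-measurable set, let ρ > 0 and s > 0, let G, G₀ : Ω → ℝ^m be measurable with G − G₀ square-integrable. Then ( ∫_Ω ∫_{B(x,ρ) ∩ Ω} |G(y) − G(x)|² dy dx )^{1/2} ≤ 2 (ω_d ρ^d)^{1/2} ‖G − G₀‖_{L²(Ω)} + ρ^{(d+2s)/2} [G₀]_s, where [G₀]_s := ( ∫_Ω ∫_Ω |G₀(x) − G₀(y)|² / |x − y|^{d+2s} dy dx )^{1/2}. -/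
open MeasureTheory
open scoped ENNReal NNReal

lemma mink3 {α : Type*} [MeasurableSpace α] (ν : Measure α) (f g h : α → ℝ≥0∞)
    (hf : AEMeasurable f ν) (hg : AEMeasurable g ν) (hh : AEMeasurable h ν) :
    (∫⁻ a, (f a + g a + h a) ^ (2:ℝ) ∂ν) ^ (1/2:ℝ)
      ≤ (∫⁻ a, f a ^ (2:ℝ) ∂ν) ^ (1/2:ℝ) + (∫⁻ a, g a ^ (2:ℝ) ∂ν) ^ (1/2:ℝ)
        + (∫⁻ a, h a ^ (2:ℝ) ∂ν) ^ (1/2:ℝ) :=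
  calc (∫⁻ a, (f a + g a + h a) ^ (2:ℝ) ∂ν) ^ (1/2:ℝ)
      ≤ (∫⁻ a, (f a + g a) ^ (2:ℝ) ∂ν)^(1/2:ℝ) + (∫⁻ a, h a ^(2:ℝ) ∂ν)^(1/2:ℝ) :=
        ENNReal.lintegral_Lp_add_le (hf.add hg) hh one_le_two
    _ ≤ _ := add_le_add_left (ENNReal.lintegral_Lp_add_le hf hg one_le_two) _

lemma prod_ball_eq {d : ℕ} (μ : Measure (EuclideanSpace ℝ (Fin d))) [SFinite μ] (ρ : ℝ)
    (f : EuclideanSpace ℝ (Fin d) × EuclideanSpace ℝ (Fin d) → ℝ≥0∞)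
    (hf : Measurable f) :
    ∫⁻ x, ∫⁻ y in Metric.ball x ρ, f (x, y) ∂μ ∂μ
      = ∫⁻ p in {p : EuclideanSpace ℝ (Fin d) × EuclideanSpace ℝ (Fin d) | dist p.2 p.1 < ρ},
          f p ∂(μ.prod μ) := by
  have hA : MeasurableSet {p : EuclideanSpace ℝ (Fin d) × EuclideanSpace ℝ (Fin d) | dist p.2 p.1 < ρ} :=
    (isOpen_lt (continuous_snd.dist continuous_fst) continuous_const).measurableSet
  have h1 : ∀ x, ∫⁻ y in Metric.ball x ρ, f (x, y) ∂μ
      = ∫⁻ y, ({p : EuclideanSpace ℝ (Fin d) × EuclideanSpace ℝ (Fin d) | dist p.2 p.1 < ρ}.indicator f) (x, y) ∂μ := by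
    intro x
    rw [← lintegral_indicator measurableSet_ball]
    refine lintegral_congr fun y => ?_
    classical
    rw [Set.indicator_apply, Set.indicator_apply]
    simp [Metric.mem_ball]
  simp_rw [h1]
  rw [← lintegral_indicator hA, lintegral_prod _ ((hf.indicator hA).aemeasurable)]

/-- For measurable `G, G₀ : Ω → ℝ^m` with `G − G₀` square-integrable,
`ρ > 0` and `s > 0`, one has (in `[0,∞]`)
`(∫_Ω ∫_{B(x,ρ)∩Ω} |G(y)−G(x)|² dy dx)^{1/2}
  ≤ 2 (ω_d ρ^d)^{1/2} ‖G−G₀‖_{L²(Ω)} + ρ^{(d+2s)/2} [G₀]_s`. -/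
theorem ball_double_integral_split_bound
    (d m : ℕ) (Ω : Set (EuclideanSpace ℝ (Fin d))) (hΩ : MeasurableSet Ω)
    (G G₀ : EuclideanSpace ℝ (Fin d) → EuclideanSpace ℝ (Fin m))
    (hG : Measurable G) (hG₀ : Measurable G₀)
    (hGG₀ : MemLp (fun x => G x - G₀ x) 2 (volume.restrict Ω))
    (s ρ : ℝ) (hs : 0 < s) (hρ : 0 < ρ) :
    (∫⁻ x in Ω, ∫⁻ y in Metric.ball x ρ ∩ Ω, (‖G y - G x‖₊ : ℝ≥0∞) ^ 2) ^ (1 / 2 : ℝ) ≤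
      2 * (volume (Metric.ball (0 : EuclideanSpace ℝ (Fin d)) 1) *
            ENNReal.ofReal (ρ ^ d)) ^ (1 / 2 : ℝ) *
          (∫⁻ x in Ω, (‖G x - G₀ x‖₊ : ℝ≥0∞) ^ 2) ^ (1 / 2 : ℝ) +
        ENNReal.ofReal (ρ ^ (((d : ℝ) + 2 * s) / 2)) *
          (∫⁻ x in Ω, ∫⁻ y in Ω,
            (‖G₀ x - G₀ y‖₊ : ℝ≥0∞) ^ 2 /
              ENNReal.ofReal (dist x y ^ ((d : ℝ) + 2 * s))) ^ (1 / 2 : ℝ) := by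
  classical
  have hd2s : (0:ℝ) < (d:ℝ) + 2 * s := by positivity
  have hpow : ∀ x : ℝ≥0∞, x ^ 2 = x ^ (2:ℝ) := fun x => by
    rw [← ENNReal.rpow_natCast x 2]; norm_num
  simp only [hpow]
  set μ := volume.restrict Ω with hμdef
  set π := μ.prod μ with hπdef
  set A : Set (EuclideanSpace ℝ (Fin d) × EuclideanSpace ℝ (Fin d)) :=
    {p | dist p.2 p.1 < ρ} with hAdef
  have hA : MeasurableSet A :=
    (isOpen_lt (continuous_snd.dist continuous_fst) continuous_const).measurableSet
  set V : ℝ≥0∞ := volume (Metric.ball (0 : EuclideanSpace ℝ (Fin d)) 1) *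
    ENNReal.ofReal (ρ ^ d) with hVdef
  have hrev : ∀ (a b : EuclideanSpace ℝ (Fin m)), ‖a - b‖₊ = ‖b - a‖₊ := by
    intro a b; rw [← neg_sub, nnnorm_neg]
  have hball : ∀ x : EuclideanSpace ℝ (Fin d), volume (Metric.ball x ρ) = V := by
    intro x
    rcases Nat.eq_zero_or_pos d with hd | hd
    · subst hd
      haveI : Subsingleton (EuclideanSpace ℝ (Fin 0)) :=
        ⟨fun a b => PiLp.ext fun i => i.elim0⟩
      have h1 : Metric.ball x ρ = Set.univ := by
        ext y; simp [Metric.mem_ball, Subsingleton.elim y x, hρ]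
      have h2 : Metric.ball (0 : EuclideanSpace ℝ (Fin 0)) 1 = Set.univ := by
        ext y; simp [Metric.mem_ball, Subsingleton.elim y (0 : EuclideanSpace ℝ (Fin 0))]
      simp [h1, h2, hVdef]
    · haveI : Nontrivial (EuclideanSpace ℝ (Fin d)) := by
        apply Module.nontrivial_of_finrank_pos (R := ℝ)
        rw [finrank_euclideanSpace_fin]; exact hd
      rw [Measure.addHaar_ball volume x hρ.le, hVdef, mul_comm]
      congr 2
      rw [finrank_euclideanSpace_fin]
  -- the L² mass of G - G₀
  set c : EuclideanSpace ℝ (Fin d) → ℝ≥0∞ := fun x => (‖G x - G₀ x‖₊ : ℝ≥0∞) ^ (2:ℝ) with hcdef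
  have hcm : Measurable c := by fun_prop
  set L : ℝ≥0∞ := (∫⁻ x, c x ∂μ) ^ (1/2:ℝ) with hLdef
  -- generic bound for integrals of functions of p.1 over A
  have hconst : ∀ g : EuclideanSpace ℝ (Fin d) → ℝ≥0∞, Measurable g →
      ∫⁻ p in A, g p.1 ∂π ≤ V * ∫⁻ x, g x ∂μ := by
    intro g hg
    rw [hπdef, ← prod_ball_eq μ ρ (fun p => g p.1) (hg.comp measurable_fst)]
    calc ∫⁻ x, ∫⁻ y in Metric.ball x ρ, g x ∂μ ∂μ
        = ∫⁻ x, g x * μ (Metric.ball x ρ) ∂μ := by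
          simp [setLIntegral_const]
      _ ≤ ∫⁻ x, g x * V ∂μ := by
          refine lintegral_mono fun x => mul_le_mul_right ?_ _
          rw [hμdef, Measure.restrict_apply measurableSet_ball, ← hball x]
          exact measure_mono Set.inter_subset_left
      _ = V * ∫⁻ x, g x ∂μ := by rw [lintegral_mul_const _ hg, mul_comm]
  -- the three pieces
  have hT3 : ∫⁻ p in A, (‖G₀ p.1 - G p.1‖₊ : ℝ≥0∞) ^ (2:ℝ) ∂π ≤ V * ∫⁻ x, c x ∂μ := by
    have := hconst (fun x => (‖G₀ x - G x‖₊ : ℝ≥0∞) ^ (2:ℝ)) (by fun_prop)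
    simp only [hcdef]
    simp only [hrev (G₀ _) (G _)] at this ⊢
    simpa using this
  have hT1 : ∫⁻ p in A, (‖G p.2 - G₀ p.2‖₊ : ℝ≥0∞) ^ (2:ℝ) ∂π ≤ V * ∫⁻ x, c x ∂μ := by
    have hswap : ∫⁻ p in A, (‖G p.2 - G₀ p.2‖₊ : ℝ≥0∞) ^ (2:ℝ) ∂π
        = ∫⁻ p in A, (‖G p.1 - G₀ p.1‖₊ : ℝ≥0∞) ^ (2:ℝ) ∂π := by
      rw [← lintegral_indicator hA, ← lintegral_indicator hA, hπdef]
      rw [← lintegral_prod_swap]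
      refine lintegral_congr fun p => ?_
      classical
      rw [Set.indicator_apply, Set.indicator_apply]
      have : p.swap ∈ A ↔ p ∈ A := by simp [hAdef, Prod.swap, dist_comm]
      simp only [this]
      rfl
    rw [hswap]
    exact hconst (fun x => (‖G x - G₀ x‖₊ : ℝ≥0∞) ^ (2:ℝ)) (by fun_prop)
  -- the seminorm piece
  set Q : EuclideanSpace ℝ (Fin d) × EuclideanSpace ℝ (Fin d) → ℝ≥0∞ := fun p =>
    (‖G₀ p.1 - G₀ p.2‖₊ : ℝ≥0∞) ^ (2:ℝ) /
      ENNReal.ofReal (dist p.1 p.2 ^ ((d:ℝ) + 2 * s)) with hQdef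
  have hQm : Measurable Q := by
    apply Measurable.div
    · fun_prop
    · exact ENNReal.measurable_ofReal.comp
        ((Real.continuous_rpow_const hd2s.le).measurable.comp
          (measurable_fst.dist measurable_snd))
  have hT2 : ∫⁻ p in A, (‖G₀ p.2 - G₀ p.1‖₊ : ℝ≥0∞) ^ (2:ℝ) ∂π
      ≤ ENNReal.ofReal (ρ ^ ((d:ℝ) + 2 * s)) * ∫⁻ p, Q p ∂π := by
    calc ∫⁻ p in A, (‖G₀ p.2 - G₀ p.1‖₊ : ℝ≥0∞) ^ (2:ℝ) ∂π
        ≤ ∫⁻ p in A, Q p * ENNReal.ofReal (ρ ^ ((d:ℝ) + 2 * s)) ∂π := by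
          refine setLIntegral_mono' hA fun p hp => ?_
          rw [hrev]
          rcases eq_or_lt_of_le (dist_nonneg : (0:ℝ) ≤ dist p.1 p.2) with h0 | h0
          · have hp12 : p.1 = p.2 := by rwa [eq_comm, dist_eq_zero] at h0
            simp [hp12, ENNReal.zero_rpow_of_pos]
          · have hne : ENNReal.ofReal (dist p.1 p.2 ^ ((d:ℝ) + 2 * s)) ≠ 0 := by
              simp only [ne_eq, ENNReal.ofReal_eq_zero, not_le]
              positivity
            have hkey : (‖G₀ p.1 - G₀ p.2‖₊ : ℝ≥0∞) ^ (2:ℝ)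
                = Q p * ENNReal.ofReal (dist p.1 p.2 ^ ((d:ℝ) + 2 * s)) :=
              (ENNReal.div_mul_cancel hne (by simp)).symm
            rw [hkey]
            refine mul_le_mul_right (ENNReal.ofReal_le_ofReal ?_) _
            exact Real.rpow_le_rpow dist_nonneg
              (le_of_lt (by rw [dist_comm]; exact hp)) hd2s.le
      _ ≤ ∫⁻ p, Q p * ENNReal.ofReal (ρ ^ ((d:ℝ) + 2 * s)) ∂π :=
          setLIntegral_le_lintegral _ _
      _ = ENNReal.ofReal (ρ ^ ((d:ℝ) + 2 * s)) * ∫⁻ p, Q p ∂π := by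
          rw [lintegral_mul_const _ hQm, mul_comm]
  -- rewrite LHS
  have hLHSeq : (∫⁻ x in Ω, ∫⁻ y in Metric.ball x ρ ∩ Ω, (‖G y - G x‖₊ : ℝ≥0∞) ^ (2:ℝ))
      = ∫⁻ p in A, (‖G p.2 - G p.1‖₊ : ℝ≥0∞) ^ (2:ℝ) ∂π := by
    have h1 : ∀ x, (∫⁻ y in Metric.ball x ρ ∩ Ω, (‖G y - G x‖₊ : ℝ≥0∞) ^ (2:ℝ))
        = ∫⁻ y in Metric.ball x ρ, (‖G y - G x‖₊ : ℝ≥0∞) ^ (2:ℝ) ∂μ := by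
      intro x; rw [hμdef, Measure.restrict_restrict measurableSet_ball]
    calc (∫⁻ x in Ω, ∫⁻ y in Metric.ball x ρ ∩ Ω, (‖G y - G x‖₊ : ℝ≥0∞) ^ (2:ℝ))
        = ∫⁻ x, ∫⁻ y in Metric.ball x ρ, (‖G y - G x‖₊ : ℝ≥0∞) ^ (2:ℝ) ∂μ ∂μ := by
          rw [hμdef]; exact lintegral_congr h1
      _ = ∫⁻ p in A, (‖G p.2 - G p.1‖₊ : ℝ≥0∞) ^ (2:ℝ) ∂π :=
          prod_ball_eq μ ρ (fun p => (‖G p.2 - G p.1‖₊ : ℝ≥0∞) ^ (2:ℝ)) (by fun_prop)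
  rw [hLHSeq]
  -- Minkowski
  have hmink : (∫⁻ p in A, (‖G p.2 - G p.1‖₊ : ℝ≥0∞) ^ (2:ℝ) ∂π) ^ (1/2:ℝ)
      ≤ (∫⁻ p in A, (‖G p.2 - G₀ p.2‖₊ : ℝ≥0∞) ^ (2:ℝ) ∂π) ^ (1/2:ℝ)
        + (∫⁻ p in A, (‖G₀ p.2 - G₀ p.1‖₊ : ℝ≥0∞) ^ (2:ℝ) ∂π) ^ (1/2:ℝ)
        + (∫⁻ p in A, (‖G₀ p.1 - G p.1‖₊ : ℝ≥0∞) ^ (2:ℝ) ∂π) ^ (1/2:ℝ) := by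
    refine le_trans ?_ (mink3 (π.restrict A) _ _ _ (by fun_prop) (by fun_prop) (by fun_prop))
    refine ENNReal.rpow_le_rpow (lintegral_mono fun p => ?_) (by norm_num)
    refine ENNReal.rpow_le_rpow ?_ (by norm_num)
    have hsum : G p.2 - G p.1 = (G p.2 - G₀ p.2) + (G₀ p.2 - G₀ p.1) + (G₀ p.1 - G p.1) := by
      abel
    rw [hsum]
    exact_mod_cast (nnnorm_add_le _ _).trans (add_le_add_left (nnnorm_add_le _ _) _)
  refine hmink.trans ?_
  have hhalf : (0:ℝ) ≤ 1/2 := by norm_num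
  have hb1 : (∫⁻ p in A, (‖G p.2 - G₀ p.2‖₊ : ℝ≥0∞) ^ (2:ℝ) ∂π) ^ (1/2:ℝ)
      ≤ V ^ (1/2:ℝ) * L := by
    rw [hLdef, ← ENNReal.mul_rpow_of_nonneg _ _ hhalf]
    exact ENNReal.rpow_le_rpow hT1 hhalf
  have hb3 : (∫⁻ p in A, (‖G₀ p.1 - G p.1‖₊ : ℝ≥0∞) ^ (2:ℝ) ∂π) ^ (1/2:ℝ)
      ≤ V ^ (1/2:ℝ) * L := by
    rw [hLdef, ← ENNReal.mul_rpow_of_nonneg _ _ hhalf]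
    exact ENNReal.rpow_le_rpow hT3 hhalf
  have hb2 : (∫⁻ p in A, (‖G₀ p.2 - G₀ p.1‖₊ : ℝ≥0∞) ^ (2:ℝ) ∂π) ^ (1/2:ℝ)
      ≤ ENNReal.ofReal (ρ ^ (((d:ℝ) + 2 * s) / 2)) * (∫⁻ p, Q p ∂π) ^ (1/2:ℝ) := by
    refine le_trans (ENNReal.rpow_le_rpow hT2 hhalf) ?_
    rw [ENNReal.mul_rpow_of_nonneg _ _ hhalf,
      ENNReal.ofReal_rpow_of_pos (Real.rpow_pos_of_pos hρ _),
      ← Real.rpow_mul hρ.le, mul_one_div]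
  have hQprod : (∫⁻ p, Q p ∂π) = ∫⁻ x, ∫⁻ y, Q (x, y) ∂μ ∂μ :=
    lintegral_prod _ hQm.aemeasurable
  calc (∫⁻ p in A, (‖G p.2 - G₀ p.2‖₊ : ℝ≥0∞) ^ (2:ℝ) ∂π) ^ (1/2:ℝ)
        + (∫⁻ p in A, (‖G₀ p.2 - G₀ p.1‖₊ : ℝ≥0∞) ^ (2:ℝ) ∂π) ^ (1/2:ℝ)
        + (∫⁻ p in A, (‖G₀ p.1 - G p.1‖₊ : ℝ≥0∞) ^ (2:ℝ) ∂π) ^ (1/2:ℝ)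
      ≤ V ^ (1/2:ℝ) * L
        + ENNReal.ofReal (ρ ^ (((d:ℝ) + 2 * s) / 2)) * (∫⁻ p, Q p ∂π) ^ (1/2:ℝ)
        + V ^ (1/2:ℝ) * L := add_le_add (add_le_add hb1 hb2) hb3
    _ = 2 * V ^ (1/2:ℝ) * L
        + ENNReal.ofReal (ρ ^ (((d:ℝ) + 2 * s) / 2)) * (∫⁻ p, Q p ∂π) ^ (1/2:ℝ) := by ring
    _ = 2 * V ^ (1/2:ℝ) * L
        + ENNReal.ofReal (ρ ^ (((d:ℝ) + 2 * s) / 2)) * (∫⁻ x, ∫⁻ y, Q (x, y) ∂μ ∂μ) ^ (1/2:ℝ) := by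
          rw [hQprod]
    _ = _ := rfl
end

section
/- (Abstract version of Proposition 4.2, error estimate for the localized effective model.) In the quasi-local kernel setting, assume there is M > 0 with ( ∫_Ω |𝒜(x,y)|_op² dy )^{1/2} ≤ M for almost every x ∈ Ω. Let X ⊆ L²(Ω; ℝ^d) be a finite-dimensional subspace, define the bilinear forms 𝔞(V, Z) := ∫_Ω ∫_Ω V(y) · (𝒜(x,y) Z(x)) dy dx and ã(V, Z) := ∫_Ω V(x) · (A_H(x) Z(x)) dx on X × X, and assume 𝔞 is coercive on X, i.e., 𝔞(E, E) ≥ c ‖E‖_{L²(Ω)}² for all E ∈ X with some c > 0. If F : X → ℝ is linear and U, Ũ ∈ X satisfy 𝔞(U, G) = F(G) and ã(Ũ, G) = F(G) for all G ∈ X, then c ‖U − Ũ‖_{L²(Ω)} ≤ M ( ∫_Ω ∫_{B(x,ρ) ∩ Ω} |Ũ(y) − Ũ(x)|² dy dx )^{1/2}. -/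
open MeasureTheory
open scoped ENNReal NNReal RealInnerProductSpace

private lemma aux_memLp_fst {α β E : Type*} [MeasurableSpace α] [MeasurableSpace β]
    [NormedAddCommGroup E] {μ : Measure α} {ν : Measure β} [SFinite ν] [IsFiniteMeasure ν]
    {f : α → E} (hf : MemLp f 2 μ) : MemLp (fun p : α × β => f p.1) 2 (μ.prod ν) := by
  have h1 : Integrable (fun x => ‖f x‖ ^ 2) μ := (memLp_two_iff_integrable_sq_norm hf.1).1 hf
  have h2 := h1.mul_prod (integrable_const (c := (1:ℝ)) (μ := ν))
  simp only [mul_one] at h2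
  exact (memLp_two_iff_integrable_sq_norm hf.1.comp_fst).2 h2

private lemma aux_memLp_snd {α β E : Type*} [MeasurableSpace α] [MeasurableSpace β]
    [NormedAddCommGroup E] {μ : Measure α} {ν : Measure β} [IsFiniteMeasure μ] [SFinite ν]
    {f : β → E} (hf : MemLp f 2 ν) : MemLp (fun p : α × β => f p.2) 2 (μ.prod ν) := by
  have h1 : Integrable (fun y => ‖f y‖ ^ 2) ν := (memLp_two_iff_integrable_sq_norm hf.1).1 hf
  have h2 := (integrable_const (c := (1:ℝ)) (μ := μ)).mul_prod h1
  simp only [one_mul] at h2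
  exact (memLp_two_iff_integrable_sq_norm hf.1.comp_snd).2 h2

private lemma aux_mul_int {α : Type*} [MeasurableSpace α] {μ : Measure α} {f g : α → ℝ}
    (hf : MemLp f 2 μ) (hg : MemLp g 2 μ) : Integrable (fun x => f x * g x) μ := by
  refine Integrable.mono' (g := fun x => f x ^ 2 + g x ^ 2)
    (hf.integrable_sq.add hg.integrable_sq) (hf.1.mul hg.1)
    (Filter.Eventually.of_forall fun x => ?_)
  rw [Real.norm_eq_abs, abs_mul]
  nlinarith [sq_nonneg (|f x| - |g x|), sq_abs (f x), sq_abs (g x), abs_nonneg (f x),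
    abs_nonneg (g x)]

private lemma aux_cauchy_schwarz {α : Type*} [MeasurableSpace α] {μ : Measure α} {f g : α → ℝ}
    (hf : MemLp f 2 μ) (hg : MemLp g 2 μ) (hf0 : ∀ x, 0 ≤ f x) (hg0 : ∀ x, 0 ≤ g x) :
    ∫ a, f a * g a ∂μ ≤ Real.sqrt (∫ a, f a ^ 2 ∂μ) * Real.sqrt (∫ a, g a ^ 2 ∂μ) := by
  have hpq : Real.HolderConjugate 2 2 := Real.HolderConjugate.two_two
  have h2 : ENNReal.ofReal (2 : ℝ) = 2 := by norm_num
  have h := integral_mul_le_Lp_mul_Lq_of_nonneg hpq (Filter.Eventually.of_forall hf0)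
    (Filter.Eventually.of_forall hg0) (h2 ▸ hf) (h2 ▸ hg)
  have hpow : ∀ x : ℝ, x ^ (2 : ℝ) = x ^ 2 := fun x => by
    rw [← Real.rpow_natCast x 2]; norm_num
  simp_rw [hpow] at h
  rwa [← Real.sqrt_eq_rpow, ← Real.sqrt_eq_rpow] at h


set_option maxHeartbeats 1000000

/-- abstract version of Proposition 4.2. In the quasi-local kernel
setting, let `X` be a finite-dimensional subspace of `L²(Ω;ℝ^d)`, assume the
quasi-local form `𝔞(V,Z) = ∫_Ω∫_Ω V(y)·(𝒜(x,y)Z(x)) dy dx` is coercive on `X` with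
constant `c > 0`, and let `U, Ũ ∈ X` solve `𝔞(U,·) = F` and `ã(Ũ,·) = F` respectively,
where `ã(V,Z) = ∫_Ω V(x)·(A_H(x)Z(x)) dx` with `A_H(x) = ∫_Ω 𝒜(x,y) dy`. Then
`c ‖U − Ũ‖_{L²(Ω)} ≤ M (∫_Ω∫_{B(x,ρ)∩Ω} |Ũ(y)−Ũ(x)|² dy dx)^{1/2}`. -/
theorem quasi_local_vs_local_error_estimate
    (d : ℕ) (Ω : Set (EuclideanSpace ℝ (Fin d))) (hΩ : MeasurableSet Ω)
    (hΩbdd : Bornology.IsBounded Ω) (ρ : ℝ) (hρ : 0 < ρ)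
    (K : EuclideanSpace ℝ (Fin d) → EuclideanSpace ℝ (Fin d) →
      (EuclideanSpace ℝ (Fin d) →L[ℝ] EuclideanSpace ℝ (Fin d)))
    (hK_meas : AEStronglyMeasurable (fun p : EuclideanSpace ℝ (Fin d) × EuclideanSpace ℝ (Fin d) => K p.1 p.2)
      ((volume.restrict Ω).prod (volume.restrict Ω)))
    (Cb : ℝ)
    (hK_bdd : ∀ᵐ p ∂((volume.restrict Ω).prod (volume.restrict Ω)), ‖K p.1 p.2‖ ≤ Cb)
    (hK_supp : ∀ x y, ρ < dist x y → K x y = 0)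
    (M : ℝ) (hM : 0 < M)
    (hK_M : ∀ᵐ x ∂(volume.restrict Ω),
      ∫⁻ y in Ω, (‖K x y‖₊ : ℝ≥0∞) ^ 2 ≤ ENNReal.ofReal M ^ 2)
    (X : Submodule ℝ (EuclideanSpace ℝ (Fin d) → EuclideanSpace ℝ (Fin d)))
    (hXfin : FiniteDimensional ℝ X)
    (hXL2 : ∀ G : X, MemLp (G : EuclideanSpace ℝ (Fin d) → EuclideanSpace ℝ (Fin d)) 2
      (volume.restrict Ω))
    (c : ℝ) (hc : 0 < c)
    (hcoer : ∀ G : X,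
      c * (∫ x in Ω, ‖(G : EuclideanSpace ℝ (Fin d) → EuclideanSpace ℝ (Fin d)) x‖ ^ 2) ≤
        ∫ x in Ω, ∫ y in Ω,
          ⟪(G : EuclideanSpace ℝ (Fin d) → EuclideanSpace ℝ (Fin d)) y,
            (K x y) ((G : EuclideanSpace ℝ (Fin d) → EuclideanSpace ℝ (Fin d)) x)⟫)
    (F : X →ₗ[ℝ] ℝ) (U Ut : X)
    (hU : ∀ G : X,
      (∫ x in Ω, ∫ y in Ω,
        ⟪(U : EuclideanSpace ℝ (Fin d) → EuclideanSpace ℝ (Fin d)) y,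
          (K x y) ((G : EuclideanSpace ℝ (Fin d) → EuclideanSpace ℝ (Fin d)) x)⟫) = F G)
    (hUt : ∀ G : X,
      (∫ x in Ω,
        ⟪(Ut : EuclideanSpace ℝ (Fin d) → EuclideanSpace ℝ (Fin d)) x,
          (∫ y in Ω, K x y) ((G : EuclideanSpace ℝ (Fin d) → EuclideanSpace ℝ (Fin d)) x)⟫) = F G) :
    c * Real.sqrt (∫ x in Ω,
        ‖(U : EuclideanSpace ℝ (Fin d) → EuclideanSpace ℝ (Fin d)) x -
          (Ut : EuclideanSpace ℝ (Fin d) → EuclideanSpace ℝ (Fin d)) x‖ ^ 2) ≤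
      M * Real.sqrt (∫ x in Ω, ∫ y in Metric.ball x ρ ∩ Ω,
        ‖(Ut : EuclideanSpace ℝ (Fin d) → EuclideanSpace ℝ (Fin d)) y -
          (Ut : EuclideanSpace ℝ (Fin d) → EuclideanSpace ℝ (Fin d)) x‖ ^ 2) := by
  classical
  set ν : Measure (EuclideanSpace ℝ (Fin d)) := volume.restrict Ω with hν_def
  haveI hfin : IsFiniteMeasure ν := by
    constructor
    rw [hν_def, Measure.restrict_apply_univ]
    exact hΩbdd.measure_lt_top
  set u : EuclideanSpace ℝ (Fin d) → EuclideanSpace ℝ (Fin d) := (U : EuclideanSpace ℝ (Fin d) → EuclideanSpace ℝ (Fin d)) with hu_def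
  set v : EuclideanSpace ℝ (Fin d) → EuclideanSpace ℝ (Fin d) := (Ut : EuclideanSpace ℝ (Fin d) → EuclideanSpace ℝ (Fin d)) with hv_def
  have hu2 : MemLp u 2 ν := by have h := hXL2 U; rw [← hu_def] at h; exact h
  have hv2 : MemLp v 2 ν := by have h := hXL2 Ut; rw [← hv_def] at h; exact h
  have he_eq : ((U - Ut : X) : EuclideanSpace ℝ (Fin d) → EuclideanSpace ℝ (Fin d))
      = fun x => u x - v x := by
    funext x
    simp [hu_def, hv_def]
  set e : EuclideanSpace ℝ (Fin d) → EuclideanSpace ℝ (Fin d) := fun x => u x - v x with he_def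
  have he2 : MemLp e 2 ν := by have h := hXL2 (U - Ut); rw [he_eq] at h; exact h
  -- measurability of the applied kernel
  have hKapp : ∀ (z : EuclideanSpace ℝ (Fin d) → EuclideanSpace ℝ (Fin d)), MemLp z 2 ν →
      AEStronglyMeasurable
        (fun p : EuclideanSpace ℝ (Fin d) × EuclideanSpace ℝ (Fin d) => (K p.1 p.2) (z p.1))
        (ν.prod ν) := fun z hz =>
    isBoundedBilinearMap_apply.continuous.comp_aestronglyMeasurable (hK_meas.prodMk hz.1.comp_fst)
  -- integrability of the two types of integrands on the product space
  have int1 : ∀ (w z : EuclideanSpace ℝ (Fin d) → EuclideanSpace ℝ (Fin d)),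
      MemLp w 2 ν → MemLp z 2 ν →
      Integrable (fun p : EuclideanSpace ℝ (Fin d) × EuclideanSpace ℝ (Fin d) =>
        ⟪w p.2, (K p.1 p.2) (z p.1)⟫) (ν.prod ν) := by
    intro w z hw hz
    have hb : Integrable (fun p : EuclideanSpace ℝ (Fin d) × EuclideanSpace ℝ (Fin d) =>
        (|Cb| * ‖z p.1‖) * ‖w p.2‖) (ν.prod ν) :=
      ((hz.integrable one_le_two).norm.const_mul |Cb|).mul_prod (hw.integrable one_le_two).norm
    refine hb.mono' (hw.1.comp_snd.inner (hKapp z hz)) ?_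
    filter_upwards [hK_bdd] with p hp
    have h1 : ‖⟪w p.2, (K p.1 p.2) (z p.1)⟫‖ ≤ ‖w p.2‖ * ‖(K p.1 p.2) (z p.1)‖ :=
      norm_inner_le_norm _ _
    have h2 : ‖(K p.1 p.2) (z p.1)‖ ≤ ‖K p.1 p.2‖ * ‖z p.1‖ := (K p.1 p.2).le_opNorm _
    have h3 : ‖K p.1 p.2‖ ≤ |Cb| := hp.trans (le_abs_self Cb)
    calc ‖⟪w p.2, (K p.1 p.2) (z p.1)⟫‖ ≤ ‖w p.2‖ * ‖(K p.1 p.2) (z p.1)‖ := h1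
      _ ≤ ‖w p.2‖ * (‖K p.1 p.2‖ * ‖z p.1‖) := mul_le_mul_of_nonneg_left h2 (norm_nonneg _)
      _ ≤ ‖w p.2‖ * (|Cb| * ‖z p.1‖) :=
          mul_le_mul_of_nonneg_left (mul_le_mul_of_nonneg_right h3 (norm_nonneg _)) (norm_nonneg _)
      _ = |Cb| * ‖z p.1‖ * ‖w p.2‖ := by ring
  have int2 : ∀ (w z : EuclideanSpace ℝ (Fin d) → EuclideanSpace ℝ (Fin d)),
      MemLp w 2 ν → MemLp z 2 ν →
      Integrable (fun p : EuclideanSpace ℝ (Fin d) × EuclideanSpace ℝ (Fin d) =>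
        ⟪w p.1, (K p.1 p.2) (z p.1)⟫) (ν.prod ν) := by
    intro w z hw hz
    have hb0 : Integrable (fun x => |Cb| * (‖w x‖ * ‖z x‖)) ν :=
      (aux_mul_int hw.norm hz.norm).const_mul |Cb|
    have hb : Integrable (fun p : EuclideanSpace ℝ (Fin d) × EuclideanSpace ℝ (Fin d) =>
        (|Cb| * (‖w p.1‖ * ‖z p.1‖)) * 1) (ν.prod ν) :=
      hb0.mul_prod (integrable_const (c := (1:ℝ)) (μ := ν))
    simp only [mul_one] at hb
    refine hb.mono' (hw.1.comp_fst.inner (hKapp z hz)) ?_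
    filter_upwards [hK_bdd] with p hp
    have h1 : ‖⟪w p.1, (K p.1 p.2) (z p.1)⟫‖ ≤ ‖w p.1‖ * ‖(K p.1 p.2) (z p.1)‖ :=
      norm_inner_le_norm _ _
    have h2 : ‖(K p.1 p.2) (z p.1)‖ ≤ ‖K p.1 p.2‖ * ‖z p.1‖ := (K p.1 p.2).le_opNorm _
    have h3 : ‖K p.1 p.2‖ ≤ |Cb| := hp.trans (le_abs_self Cb)
    calc ‖⟪w p.1, (K p.1 p.2) (z p.1)⟫‖ ≤ ‖w p.1‖ * ‖(K p.1 p.2) (z p.1)‖ := h1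
      _ ≤ ‖w p.1‖ * (‖K p.1 p.2‖ * ‖z p.1‖) := mul_le_mul_of_nonneg_left h2 (norm_nonneg _)
      _ ≤ ‖w p.1‖ * (|Cb| * ‖z p.1‖) :=
          mul_le_mul_of_nonneg_left (mul_le_mul_of_nonneg_right h3 (norm_nonneg _)) (norm_nonneg _)
      _ = |Cb| * (‖w p.1‖ * ‖z p.1‖) := by ring
  -- iterated integrals as product integrals
  have conv1 : ∀ (w z : EuclideanSpace ℝ (Fin d) → EuclideanSpace ℝ (Fin d)),
      MemLp w 2 ν → MemLp z 2 ν →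
      (∫ x, ∫ y, ⟪w y, (K x y) (z x)⟫ ∂ν ∂ν)
        = ∫ p, ⟪w p.2, (K p.1 p.2) (z p.1)⟫ ∂(ν.prod ν) := fun w z hw hz =>
    (integral_prod _ (int1 w z hw hz)).symm
  have conv2 : ∀ (w z : EuclideanSpace ℝ (Fin d) → EuclideanSpace ℝ (Fin d)),
      MemLp w 2 ν → MemLp z 2 ν →
      (∫ x, ∫ y, ⟪w x, (K x y) (z x)⟫ ∂ν ∂ν)
        = ∫ p, ⟪w p.1, (K p.1 p.2) (z p.1)⟫ ∂(ν.prod ν) := fun w z hw hz =>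
    (integral_prod _ (int2 w z hw hz)).symm
  -- the coercivity statement for e
  have hcoerE := hcoer (U - Ut)
  rw [he_eq] at hcoerE
  have step_coer : c * (∫ x, ‖e x‖ ^ 2 ∂ν)
      ≤ ∫ p, ⟪e p.2, (K p.1 p.2) (e p.1)⟫ ∂(ν.prod ν) := by
    rw [← conv1 e e he2 he2]
    exact hcoerE
  have hUE := hU (U - Ut)
  rw [he_eq] at hUE
  have step_hU : (∫ p, ⟪u p.2, (K p.1 p.2) (e p.1)⟫ ∂(ν.prod ν)) = F (U - Ut) := by
    rw [← conv1 u e hu2 he2]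
    exact hUE
  have hUtE := hUt (U - Ut)
  rw [he_eq] at hUtE
  have hKae_meas : ∀ᵐ x ∂ν, AEStronglyMeasurable (fun y => K x y) ν := hK_meas.prodMk_left
  have hKae_bdd : ∀ᵐ x ∂ν, ∀ᵐ y ∂ν, ‖K x y‖ ≤ Cb := Measure.ae_ae_of_ae_prod hK_bdd
  have step_tilde : (∫ p, ⟪v p.1, (K p.1 p.2) (e p.1)⟫ ∂(ν.prod ν)) = F (U - Ut) := by
    rw [← hUtE, ← conv2 v e hv2 he2]
    apply integral_congr_ae
    filter_upwards [hKae_meas, hKae_bdd] with x hm hbd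
    have hKint : Integrable (fun y => K x y) ν := by
      refine Integrable.mono' (integrable_const (c := |Cb|) (μ := ν)) hm ?_
      filter_upwards [hbd] with y hy using hy.trans (le_abs_self Cb)
    rw [ContinuousLinearMap.integral_apply hKint]
    exact integral_inner (hKint.apply_continuousLinearMap (e x)) (v x)
  have step_sub : (∫ p, ⟪e p.2, (K p.1 p.2) (e p.1)⟫ ∂(ν.prod ν))
      = (∫ p, ⟪u p.2, (K p.1 p.2) (e p.1)⟫ ∂(ν.prod ν))
        - ∫ p, ⟪v p.2, (K p.1 p.2) (e p.1)⟫ ∂(ν.prod ν) := by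
    rw [← integral_sub (int1 u e hu2 he2) (int1 v e hv2 he2)]
    apply integral_congr_ae
    filter_upwards with p
    simp [he_def, inner_sub_left]
  have step_sub2 : (∫ p, ⟪v p.1 - v p.2, (K p.1 p.2) (e p.1)⟫ ∂(ν.prod ν))
      = (∫ p, ⟪v p.1, (K p.1 p.2) (e p.1)⟫ ∂(ν.prod ν))
        - ∫ p, ⟪v p.2, (K p.1 p.2) (e p.1)⟫ ∂(ν.prod ν) := by
    rw [← integral_sub (int2 v e hv2 he2) (int1 v e hv2 he2)]
    apply integral_congr_ae
    filter_upwards with p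
    simp [inner_sub_left]
  have hD : c * (∫ x, ‖e x‖ ^ 2 ∂ν)
      ≤ ∫ p, ⟪v p.1 - v p.2, (K p.1 p.2) (e p.1)⟫ ∂(ν.prod ν) := by
    calc c * (∫ x, ‖e x‖ ^ 2 ∂ν)
        ≤ ∫ p, ⟪e p.2, (K p.1 p.2) (e p.1)⟫ ∂(ν.prod ν) := step_coer
      _ = (∫ p, ⟪u p.2, (K p.1 p.2) (e p.1)⟫ ∂(ν.prod ν))
          - ∫ p, ⟪v p.2, (K p.1 p.2) (e p.1)⟫ ∂(ν.prod ν) := step_sub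
      _ = F (U - Ut) - ∫ p, ⟪v p.2, (K p.1 p.2) (e p.1)⟫ ∂(ν.prod ν) := by rw [step_hU]
      _ = (∫ p, ⟪v p.1, (K p.1 p.2) (e p.1)⟫ ∂(ν.prod ν))
          - ∫ p, ⟪v p.2, (K p.1 p.2) (e p.1)⟫ ∂(ν.prod ν) := by rw [step_tilde]
      _ = ∫ p, ⟪v p.1 - v p.2, (K p.1 p.2) (e p.1)⟫ ∂(ν.prod ν) := step_sub2.symm
  -- the two Cauchy-Schwarz factors
  set S : Set (EuclideanSpace ℝ (Fin d) × EuclideanSpace ℝ (Fin d)) :=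
    {p | dist p.1 p.2 < ρ} with hS_def
  have hS : MeasurableSet S :=
    (isOpen_lt (continuous_fst.dist continuous_snd) continuous_const).measurableSet
  set F' : EuclideanSpace ℝ (Fin d) × EuclideanSpace ℝ (Fin d) → ℝ :=
    S.indicator (fun p => ‖v p.1 - v p.2‖) with hF'_def
  set G' : EuclideanSpace ℝ (Fin d) × EuclideanSpace ℝ (Fin d) → ℝ :=
    fun p => ‖K p.1 p.2‖ * ‖e p.1‖ with hG'_def
  have hF' : MemLp F' 2 (ν.prod ν) := by
    have h := ((aux_memLp_fst (ν := ν) hv2).sub (aux_memLp_snd (μ := ν) hv2)).norm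
    rw [hF'_def]
    exact MemLp.indicator hS h
  have hG' : MemLp G' 2 (ν.prod ν) := by
    refine MemLp.of_le ((aux_memLp_fst (ν := ν) he2.norm).const_mul |Cb|)
      (hK_meas.norm.mul he2.1.comp_fst.norm) ?_
    filter_upwards [hK_bdd] with p hp
    have h1 : (0:ℝ) ≤ ‖e p.1‖ := norm_nonneg _
    have h2 : ‖K p.1 p.2‖ ≤ |Cb| := hp.trans (le_abs_self Cb)
    have h3 : (0:ℝ) ≤ ‖K p.1 p.2‖ := norm_nonneg _
    have h4 : G' p = ‖K p.1 p.2‖ * ‖e p.1‖ := by rw [hG'_def]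
    rw [h4, Real.norm_eq_abs, Real.norm_eq_abs, abs_mul, abs_of_nonneg h3, abs_of_nonneg h1]
    calc ‖K p.1 p.2‖ * ‖e p.1‖ ≤ |Cb| * ‖e p.1‖ := mul_le_mul_of_nonneg_right h2 h1
      _ ≤ |(|Cb| * ‖e p.1‖)| := le_abs_self _
  -- the diagonal-distance-ρ set is null
  have hsph : (ν.prod ν)
      {p : EuclideanSpace ℝ (Fin d) × EuclideanSpace ℝ (Fin d) | dist p.1 p.2 = ρ} = 0 := by
    have hSm : MeasurableSet
        {p : EuclideanSpace ℝ (Fin d) × EuclideanSpace ℝ (Fin d) | dist p.1 p.2 = ρ} :=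
      (isClosed_eq (continuous_fst.dist continuous_snd) continuous_const).measurableSet
    rw [Measure.prod_apply hSm]
    have hz : ∀ x : EuclideanSpace ℝ (Fin d),
        ν (Prod.mk x ⁻¹'
          {p : EuclideanSpace ℝ (Fin d) × EuclideanSpace ℝ (Fin d) | dist p.1 p.2 = ρ}) = 0 := by
      intro x
      refine measure_mono_null (t := Metric.sphere x ρ) ?_ ?_
      · intro y hy
        simp only [Set.mem_preimage, Set.mem_setOf_eq] at hy
        rw [Metric.mem_sphere, dist_comm]
        exact hy
      · refine le_antisymm ?_ zero_le
        rw [hν_def]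
        calc (volume.restrict Ω) (Metric.sphere x ρ)
            ≤ volume (Metric.sphere x ρ) := Measure.restrict_apply_le _ _
          _ = 0 := Measure.addHaar_sphere_of_ne_zero volume x hρ.ne'
    have hzz : (∫⁻ x, ν (Prod.mk x ⁻¹'
        {p : EuclideanSpace ℝ (Fin d) × EuclideanSpace ℝ (Fin d) | dist p.1 p.2 = ρ}) ∂ν)
        = ∫⁻ _, 0 ∂ν := lintegral_congr fun x => hz x
    rw [hzz, lintegral_zero]
  have h0 : ∀ᵐ p ∂(ν.prod ν),
      ¬ (dist (p : EuclideanSpace ℝ (Fin d) × EuclideanSpace ℝ (Fin d)).1 p.2 = ρ) := by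
    rw [ae_iff]
    simpa using hsph
  have hbound : ∀ᵐ p ∂(ν.prod ν),
      ‖⟪v p.1 - v p.2, (K p.1 p.2) (e p.1)⟫‖ ≤ F' p * G' p := by
    filter_upwards [h0] with p hp
    rcases lt_or_gt_of_ne hp with hlt | hgt
    · have hmem : p ∈ S := hlt
      have hFp : F' p = ‖v p.1 - v p.2‖ := by
        rw [hF'_def]; exact Set.indicator_of_mem hmem _
      have hGp : G' p = ‖K p.1 p.2‖ * ‖e p.1‖ := by rw [hG'_def]
      rw [hFp, hGp]
      calc ‖⟪v p.1 - v p.2, (K p.1 p.2) (e p.1)⟫‖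
          ≤ ‖v p.1 - v p.2‖ * ‖(K p.1 p.2) (e p.1)‖ := norm_inner_le_norm _ _
        _ ≤ ‖v p.1 - v p.2‖ * (‖K p.1 p.2‖ * ‖e p.1‖) :=
            mul_le_mul_of_nonneg_left ((K p.1 p.2).le_opNorm _) (norm_nonneg _)
    · have hzero : K p.1 p.2 = 0 := hK_supp _ _ hgt
      have hGp : G' p = 0 := by simp only [hG'_def]; rw [hzero, norm_zero, zero_mul]
      rw [hGp, mul_zero, hzero]
      simp only [ContinuousLinearMap.zero_apply, inner_zero_right, norm_zero, le_refl]
  have hDF : (∫ p, ⟪v p.1 - v p.2, (K p.1 p.2) (e p.1)⟫ ∂(ν.prod ν))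
      ≤ ∫ p, F' p * G' p ∂(ν.prod ν) := by
    have hFG : Integrable (fun p => F' p * G' p) (ν.prod ν) := aux_mul_int hF' hG'
    calc (∫ p, ⟪v p.1 - v p.2, (K p.1 p.2) (e p.1)⟫ ∂(ν.prod ν))
        ≤ |∫ p, ⟪v p.1 - v p.2, (K p.1 p.2) (e p.1)⟫ ∂(ν.prod ν)| := le_abs_self _
      _ = ‖∫ p, ⟪v p.1 - v p.2, (K p.1 p.2) (e p.1)⟫ ∂(ν.prod ν)‖ :=
          (Real.norm_eq_abs _).symm
      _ ≤ ∫ p, ‖⟪v p.1 - v p.2, (K p.1 p.2) (e p.1)⟫‖ ∂(ν.prod ν) :=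
          norm_integral_le_integral_norm _
      _ ≤ ∫ p, F' p * G' p ∂(ν.prod ν) :=
          integral_mono_of_nonneg (Filter.Eventually.of_forall fun p => norm_nonneg _) hFG hbound
  have hF'0 : ∀ p, 0 ≤ F' p := fun p => by
    rw [hF'_def]; exact Set.indicator_nonneg (fun q _ => norm_nonneg _) p
  have hG'0 : ∀ p, 0 ≤ G' p := fun p => by
    rw [hG'_def]; exact mul_nonneg (norm_nonneg _) (norm_nonneg _)
  have hCS := aux_cauchy_schwarz hF' hG' hF'0 hG'0
  -- identify the F' integral with the goal quantity
  have hQ : (∫ p, F' p ^ 2 ∂(ν.prod ν))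
      = ∫ x, (∫ y in Metric.ball x ρ ∩ Ω, ‖v y - v x‖ ^ 2) ∂ν := by
    rw [integral_prod _ hF'.integrable_sq]
    apply integral_congr_ae
    filter_upwards with x
    have hptw : ∀ y, F' (x, y) ^ 2
        = (Metric.ball x ρ).indicator (fun y => ‖v y - v x‖ ^ 2) y := by
      intro y
      by_cases hy : dist x y < ρ
      · have h1 : F' (x, y) = ‖v x - v y‖ := by
          rw [hF'_def]; exact Set.indicator_of_mem (show (x, y) ∈ S from hy) _
        have h2 : y ∈ Metric.ball x ρ := by rw [Metric.mem_ball, dist_comm]; exact hy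
        rw [h1, Set.indicator_of_mem h2, norm_sub_rev]
      · have h1 : F' (x, y) = 0 := by
          rw [hF'_def]; exact Set.indicator_of_notMem (show (x, y) ∉ S from hy) _
        have h2 : y ∉ Metric.ball x ρ := by rw [Metric.mem_ball, dist_comm]; exact hy
        rw [h1, Set.indicator_of_notMem h2]
        norm_num
    simp_rw [hptw]
    rw [integral_indicator measurableSet_ball, hν_def,
      Measure.restrict_restrict measurableSet_ball]
  -- bound the G' integral
  have hG2 : (∫ p, G' p ^ 2 ∂(ν.prod ν)) ≤ M ^ 2 * ∫ x, ‖e x‖ ^ 2 ∂ν := by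
    rw [integral_prod _ hG'.integrable_sq]
    have hmarg : Integrable (fun x => ∫ y, G' (x, y) ^ 2 ∂ν) ν :=
      hG'.integrable_sq.integral_prod_left
    have hstep : ∀ᵐ x ∂ν, (∫ y, G' (x, y) ^ 2 ∂ν) ≤ ‖e x‖ ^ 2 * M ^ 2 := by
      filter_upwards [hK_M, hKae_meas] with x hx hm
      have hmeas2 : AEStronglyMeasurable (fun y => ‖K x y‖ ^ 2) ν :=
        (hm.norm.aemeasurable.pow_const 2).aestronglyMeasurable
      have h1 : (∫ y, ‖K x y‖ ^ 2 ∂ν) ≤ M ^ 2 := by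
        rw [integral_eq_lintegral_of_nonneg_ae
          (Filter.Eventually.of_forall fun y => sq_nonneg _) hmeas2]
        have heq : ∀ y, ENNReal.ofReal (‖K x y‖ ^ 2) = (‖K x y‖₊ : ℝ≥0∞) ^ 2 := fun y => by
          rw [ENNReal.ofReal_pow (norm_nonneg _), ofReal_norm, enorm_eq_nnnorm]
        simp_rw [heq]
        calc (∫⁻ y, ((‖K x y‖₊ : ℝ≥0∞)) ^ 2 ∂ν).toReal
            ≤ ((ENNReal.ofReal M) ^ 2).toReal := ENNReal.toReal_mono (ENNReal.pow_ne_top ENNReal.ofReal_ne_top) hx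
          _ = M ^ 2 := by rw [ENNReal.toReal_pow, ENNReal.toReal_ofReal hM.le]
      have h2 : (∫ y, G' (x, y) ^ 2 ∂ν) = (∫ y, ‖K x y‖ ^ 2 ∂ν) * ‖e x‖ ^ 2 := by
        simp only [hG'_def]
        simp_rw [mul_pow]
        exact integral_mul_const _ _
      rw [h2]
      have h3 : (0:ℝ) ≤ ‖e x‖ ^ 2 := sq_nonneg _
      calc (∫ y, ‖K x y‖ ^ 2 ∂ν) * ‖e x‖ ^ 2 ≤ M ^ 2 * ‖e x‖ ^ 2 :=
          mul_le_mul_of_nonneg_right h1 h3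
        _ = ‖e x‖ ^ 2 * M ^ 2 := mul_comm _ _
    calc (∫ x, ∫ y, G' (x, y) ^ 2 ∂ν ∂ν) ≤ ∫ x, ‖e x‖ ^ 2 * M ^ 2 ∂ν :=
        integral_mono_ae hmarg ((he2.norm.integrable_sq).mul_const _) hstep
      _ = M ^ 2 * ∫ x, ‖e x‖ ^ 2 ∂ν := by rw [integral_mul_const]; ring
  -- put everything together
  have hP0 : (0:ℝ) ≤ ∫ x, ‖e x‖ ^ 2 ∂ν := integral_nonneg fun x => sq_nonneg _
  set P : ℝ := ∫ x, ‖e x‖ ^ 2 ∂ν with hP_def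
  set Q : ℝ := ∫ x, (∫ y in Metric.ball x ρ ∩ Ω, ‖v y - v x‖ ^ 2) ∂ν with hQ_def
  have hmain : c * P ≤ Real.sqrt Q * (M * Real.sqrt P) := by
    calc c * P ≤ ∫ p, ⟪v p.1 - v p.2, (K p.1 p.2) (e p.1)⟫ ∂(ν.prod ν) := hD
      _ ≤ ∫ p, F' p * G' p ∂(ν.prod ν) := hDF
      _ ≤ Real.sqrt (∫ p, F' p ^ 2 ∂(ν.prod ν)) * Real.sqrt (∫ p, G' p ^ 2 ∂(ν.prod ν)) := hCS
      _ ≤ Real.sqrt Q * Real.sqrt (M ^ 2 * P) :=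
          mul_le_mul (le_of_eq (congrArg Real.sqrt hQ)) (Real.sqrt_le_sqrt hG2)
            (Real.sqrt_nonneg _) (Real.sqrt_nonneg _)
      _ = Real.sqrt Q * (M * Real.sqrt P) := by
          rw [Real.sqrt_mul (sq_nonneg M), Real.sqrt_sq hM.le]
  have hgoal : c * Real.sqrt P ≤ M * Real.sqrt Q := by
    rcases eq_or_lt_of_le hP0 with h0' | hpos
    · rw [← h0', Real.sqrt_zero, mul_zero]
      exact mul_nonneg hM.le (Real.sqrt_nonneg _)
    · have hsq : 0 < Real.sqrt P := Real.sqrt_pos.mpr hpos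
      have hPP : Real.sqrt P * Real.sqrt P = P := Real.mul_self_sqrt hP0
      nlinarith [hmain, hsq, Real.sqrt_nonneg Q]
  exact hgoal
end
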